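/- Let M and M̃ be smooth orientable 3-manifolds carrying 1-adapted bi-contact coframings (ω¹,ω²,ω³) and (ω̃¹,ω̃²,ω̃³) with the same sign ε = ±1, and let Φ : M → M̃ be a diffeomorphism such that Φ*ω̃¹ = f ω¹ and Φ*ω̃² = g ω² for nowhere-vanishing smooth functions f, g on M. Then f² = g², i.e. g = ±f; in other words, every bi-contactomorphism acts as a homothety on the 1-adapted contact 1-forms. -/
import Mathlib


/-!
An abstract framework for the (truncated) exterior algebra of differential forms
on a smooth manifold whose underlying point set is `M`.  Smooth functions are
modeled by elements of `M → ℝ`; the modules `Ω1`, `Ω2`, `Ω3` model the spaces of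
smooth differential 1-, 2- and 3-forms, `d0, d1, d2` model the exterior
derivative and `w11, w12` the wedge products, subject to the usual identities
(Leibniz rules, `d ∘ d = 0`, graded (anti)commutativity, associativity).
-/
structure FormCtx (M : Type*) where
  Ω1 : Type*
  Ω2 : Type*
  Ω3 : Type*
  [acg1 : AddCommGroup Ω1]
  [acg2 : AddCommGroup Ω2]
  [acg3 : AddCommGroup Ω3]
  [mod1 : Module (M → ℝ) Ω1]
  [mod2 : Module (M → ℝ) Ω2]
  [mod3 : Module (M → ℝ) Ω3]
  d0 : (M → ℝ) → Ω1
  d1 : Ω1 → Ω2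
  d2 : Ω2 → Ω3
  w11 : Ω1 → Ω1 → Ω2
  w12 : Ω1 → Ω2 → Ω3
  d0_add : ∀ f g, d0 (f + g) = d0 f + d0 g
  d0_mul : ∀ f g, d0 (f * g) = f • d0 g + g • d0 f
  d1_add : ∀ a b, d1 (a + b) = d1 a + d1 b
  d1_smul : ∀ (f : M → ℝ) a, d1 (f • a) = f • d1 a + w11 (d0 f) a
  d2_add : ∀ a b, d2 (a + b) = d2 a + d2 b
  d2_smul : ∀ (f : M → ℝ) a, d2 (f • a) = f • d2 a + w12 (d0 f) a
  dd0 : ∀ f, d1 (d0 f) = 0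
  dd1 : ∀ a, d2 (d1 a) = 0
  w11_add_left : ∀ a b c, w11 (a + b) c = w11 a c + w11 b c
  w11_smul_left : ∀ (f : M → ℝ) a b, w11 (f • a) b = f • w11 a b
  w11_anticomm : ∀ a b, w11 a b = - w11 b a
  w12_add_left : ∀ a b c, w12 (a + b) c = w12 a c + w12 b c
  w12_add_right : ∀ a b c, w12 a (b + c) = w12 a b + w12 a c
  w12_smul_left : ∀ (f : M → ℝ) a b, w12 (f • a) b = f • w12 a b
  w12_smul_right : ∀ (f : M → ℝ) a b, w12 a (f • b) = f • w12 a b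
  w12_w11 : ∀ a b c, w12 a (w11 b c) = w12 c (w11 a b)
  d_w11 : ∀ a b, d2 (w11 a b) = w12 b (d1 a) - w12 a (d1 b)

attribute [instance] FormCtx.acg1 FormCtx.acg2 FormCtx.acg3
attribute [instance] FormCtx.mod1 FormCtx.mod2 FormCtx.mod3

namespace FormCtx

variable {M : Type*} (F : FormCtx M)

/-- A 3-form is a *volume form* iff it is an `(M → ℝ)`-basis of the module of
3-forms; on a 3-manifold this says exactly that it is nowhere vanishing. -/
def IsVolume (τ : F.Ω3) : Prop := ∀ σ : F.Ω3, ∃! f : M → ℝ, σ = f • τ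

/-- A 1-form `ω` is a contact form iff `ω ∧ dω` is a volume form. -/
def IsContact (ω : F.Ω1) : Prop := F.IsVolume (F.w12 ω (F.d1 ω))

/-- A 2-form on a 3-manifold is nowhere vanishing iff some 1-form wedges
with it to a volume form. -/
def Nvz2 (φ : F.Ω2) : Prop := ∃ α : F.Ω1, F.IsVolume (F.w12 α φ)

/-- `(ω1, ω2)` is a bi-contact structure: both are contact forms and their
contact plane fields are everywhere distinct (`ω1 ∧ ω2` nowhere zero). -/
def IsBiContact (ω1 ω2 : F.Ω1) : Prop :=
  F.IsContact ω1 ∧ F.IsContact ω2 ∧ F.Nvz2 (F.w11 ω1 ω2)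

/-- The 3-form `ω1 ∧ ω2 ∧ ω3`. -/
def vol (ω1 ω2 ω3 : F.Ω1) : F.Ω3 := F.w12 ω1 (F.w11 ω2 ω3)

/-- `(ω1, ω2, ω3)` is a 1-adapted coframing with sign `ε`:
`ω¹ ∧ dω¹ = −ε ω² ∧ dω² = ω¹ ∧ ω² ∧ ω³`, the latter being a volume form. -/
def IsAdapted (ε : ℝ) (ω1 ω2 ω3 : F.Ω1) : Prop :=
  (ε = 1 ∨ ε = -1) ∧ F.IsVolume (F.vol ω1 ω2 ω3) ∧
    F.w12 ω1 (F.d1 ω1) = F.vol ω1 ω2 ω3 ∧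
    F.w12 ω2 (F.d1 ω2) = (fun _ : M => -ε) • F.vol ω1 ω2 ω3

/-- The pencil `ω_a = a₁ ω¹ + a₂ ω²` with constant coefficients. -/
def pencil (ω1 ω2 : F.Ω1) (a1 a2 : ℝ) : F.Ω1 :=
  (fun _ : M => a1) • ω1 + (fun _ : M => a2) • ω2

end FormCtx

/-- Pullback data for a smooth map `Φ : M → N`: the pullback operation on
differential forms, compatible with the module structures, the exterior
derivatives and the wedge products (pullback of functions is `f ∘ Φ`). -/
structure FormPullback {M N : Type*} (F : FormCtx M) (G : FormCtx N) (Φ : M → N) where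
  p1 : G.Ω1 → F.Ω1
  p2 : G.Ω2 → F.Ω2
  p3 : G.Ω3 → F.Ω3
  p1_add : ∀ a b, p1 (a + b) = p1 a + p1 b
  p2_add : ∀ a b, p2 (a + b) = p2 a + p2 b
  p3_add : ∀ a b, p3 (a + b) = p3 a + p3 b
  p1_smul : ∀ (f : N → ℝ) a, p1 (f • a) = (f ∘ Φ) • p1 a
  p2_smul : ∀ (f : N → ℝ) a, p2 (f • a) = (f ∘ Φ) • p2 a
  p3_smul : ∀ (f : N → ℝ) a, p3 (f • a) = (f ∘ Φ) • p3 a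
  p_d0 : ∀ f : N → ℝ, F.d0 (f ∘ Φ) = p1 (G.d0 f)
  p_d1 : ∀ a, F.d1 (p1 a) = p2 (G.d1 a)
  p_d2 : ∀ a, F.d2 (p2 a) = p3 (G.d2 a)
  p_w11 : ∀ a b, p2 (G.w11 a b) = F.w11 (p1 a) (p1 b)
  p_w12 : ∀ a b, p3 (G.w12 a b) = F.w12 (p1 a) (p2 b)

/-!
STATEMENT 0.  Let `M`, `N` be smooth orientable 3-manifolds carrying 1-adapted
bi-contact coframings `(ω1, ω2, ω3)` and `(η1, η2, η3)` with the same sign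
`ε = ±1`, and let `Φ : M → N` be a diffeomorphism (a bijection together with
pullback data on forms) such that `Φ*η1 = f • ω1` and `Φ*η2 = g • ω2` for
nowhere-vanishing smooth functions `f`, `g` on `M`.  Then `f² = g²`, i.e.
`g = ±f`: every bi-contactomorphism is a homothety of the 1-adapted contact
1-forms.
-/
namespace FormCtx

variable {M : Type*} (F : FormCtx M)

lemma w12_zero_right (a : F.Ω1) : F.w12 a (0 : F.Ω2) = 0 := by
  have h := F.w12_smul_right 0 a 0
  simpa using h

lemma w12_w11_self (a b : F.Ω1) : F.w12 a (F.w11 b a) = 0 := by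
  have hc := F.w12_w11 a b a
  have hs : F.w11 b a + F.w11 a b = 0 := by
    rw [F.w11_anticomm b a]; exact neg_add_cancel _
  have hsum : F.w12 a (F.w11 b a) + F.w12 a (F.w11 a b) = 0 := by
    rw [← F.w12_add_right, hs, F.w12_zero_right]
  rw [← hc] at hsum
  have h2 : (2 : M → ℝ) • F.w12 a (F.w11 b a) = 0 := by
    rw [two_smul]; exact hsum
  have hinv : ((fun _ => (2:ℝ)⁻¹ : M → ℝ) * (2 : M → ℝ)) • F.w12 a (F.w11 b a) = 0 := by
    rw [← smul_smul, h2, smul_zero]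
  have hone : ((fun _ => (2:ℝ)⁻¹ : M → ℝ) * (2 : M → ℝ)) = (1 : M → ℝ) := by
    funext x
    show (2:ℝ)⁻¹ * (2 : M → ℝ) x = 1
    norm_num
  rw [hone, one_smul] at hinv
  exact hinv

lemma pull_contact_form (f : M → ℝ) (ω : F.Ω1) :
    F.w12 (f • ω) (F.d1 (f • ω)) = (f * f) • F.w12 ω (F.d1 ω) := by
  rw [F.d1_smul, F.w12_smul_left, F.w12_add_right, F.w12_smul_right,
    F.w12_w11_self, add_zero, smul_smul]

end FormCtx

theorem bicontactomorphisms_are_homotheties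
    {M N : Type*} (F : FormCtx M) (G : FormCtx N)
    (ε : ℝ) (ω1 ω2 ω3 : F.Ω1) (η1 η2 η3 : G.Ω1)
    (hbcF : F.IsBiContact ω1 ω2) (hbcG : G.IsBiContact η1 η2)
    (hadF : F.IsAdapted ε ω1 ω2 ω3) (hadG : G.IsAdapted ε η1 η2 η3)
    (Φ : M → N) (hΦ : Function.Bijective Φ) (P : FormPullback F G Φ)
    (f g : M → ℝ) (hf : ∀ p, f p ≠ 0) (hg : ∀ p, g p ≠ 0)
    (hp1 : P.p1 η1 = f • ω1) (hp2 : P.p1 η2 = g • ω2) :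
    f ^ 2 = g ^ 2 := by
  obtain ⟨hεpm, hvolF, hω1, hω2⟩ := hadF
  obtain ⟨-, -, hη1, hη2⟩ := hadG
  -- pullback of η1 ∧ dη1
  have key1 : P.p3 (G.vol η1 η2 η3) = (f * f) • F.vol ω1 ω2 ω3 := by
    rw [← hη1, P.p_w12, ← P.p_d1, hp1, F.pull_contact_form, hω1]
  -- pullback of η2 ∧ dη2
  have key2 : ((fun _ : N => -ε) ∘ Φ) • P.p3 (G.vol η1 η2 η3)
      = ((g * g) * fun _ : M => -ε) • F.vol ω1 ω2 ω3 := by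
    rw [← P.p3_smul, ← hη2, P.p_w12, ← P.p_d1, hp2, F.pull_contact_form, hω2, smul_smul]
  rw [key1, smul_smul] at key2
  -- uniqueness of the coefficient against the volume form
  obtain ⟨h, -, hu⟩ := hvolF ((((fun _ : N => -ε) ∘ Φ) * (f * f)) • F.vol ω1 ω2 ω3)
  have e1 : ((fun _ : N => -ε) ∘ Φ) * (f * f) = h := hu _ rfl
  have e2 : (g * g) * (fun _ : M => -ε) = h := hu _ key2
  have hfg := e1.trans e2.symm
  have hε : ε ≠ 0 := by rcases hεpm with h' | h' <;> rw [h'] <;> norm_num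
  funext p
  have hp := congrFun hfg p
  have hp' : -ε * (f p * f p) = g p * g p * -ε := hp
  have : f p * f p = g p * g p := by
    have hne : (-ε : ℝ) ≠ 0 := neg_ne_zero.mpr hε
    apply mul_right_cancel₀ hne
    linarith [hp']
  simpa [pow_two] using this
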